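/- Under the same hypotheses (b, r ∈ L^p([0,L]), 1 < p < ∞, exp(i∫₀^L b) ≠ 1), the function T_b r is Hölder continuous of order 1 − 1/p on the closed curve: there is a constant C depending on L, p, b such that |(T_b r)(s₁) − (T_b r)(s₂)| ≤ C |s₁ − s₂|^{1−1/p} ‖r‖_{L^p} for all s₁, s₂, where |s₁ − s₂| is interpreted as the distance on the circle ℝ/Lℤ. -/

import Mathlib

open MeasureTheory Set intervalIntegral

/-- The solution operator `T_b` for the periodic ODE `-ih' + bh = r` on a closed curve of
length `L` parametrized by arc length. -/
noncomputable def Tb (L : ℝ) (b r : ℝ → ℂ) (s : ℝ) : ℂ :=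
  Complex.I * (Complex.exp (Complex.I * ∫ t in (0:ℝ)..L, b t) - 1)⁻¹ *
    ∫ t in (0:ℝ)..L, r t * Complex.exp (Complex.I *
      (if s ≤ t then ∫ τ in s..t, b τ else (∫ τ in s..L, b τ) + ∫ τ in (0:ℝ)..t, b τ))


lemma lipExp {x : ℝ} {z₁ z₂ : ℂ} (h₁ : ‖z₁‖ ≤ x) (h₂ : ‖z₂‖ ≤ x) :
    ‖Complex.exp z₁ - Complex.exp z₂‖ ≤ Real.exp x * ‖z₁ - z₂‖ := by
  have hs : Convex ℝ (Metric.closedBall (0:ℂ) x) := convex_closedBall _ _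
  have h := hs.norm_image_sub_le_of_norm_hasDerivWithin_le
      (f := Complex.exp) (f' := Complex.exp) (C := Real.exp x)
      (fun z _ => (Complex.hasDerivAt_exp z).hasDerivWithinAt)
      (fun z hz => by
        rw [Complex.norm_exp]
        exact Real.exp_le_exp.2 ((Complex.re_le_norm z).trans
          (by simpa using mem_closedBall_zero_iff.1 hz)))
      (mem_closedBall_zero_iff.2 (by simpa using h₂))
      (mem_closedBall_zero_iff.2 (by simpa using h₁))
  simpa using h

lemma holderEst {p : ℝ} (hp : 1 < p) {f : ℝ → ℂ} {A S : Set ℝ}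
    (hS : MeasurableSet S) (hSA : S ⊆ A) (hfin : volume A ≠ ⊤)
    (hf : MemLp f (ENNReal.ofReal p) (volume.restrict A)) :
    ∫ t in S, ‖f t‖ ≤
      (volume S).toReal ^ (1 - 1/p) * (∫ t in A, ‖f t‖ ^ p) ^ (1/p) := by
  have hp0 : 0 < p := lt_trans one_pos hp
  set q : ENNReal := ENNReal.ofReal p with hq
  have hq1 : 1 ≤ q := by
    rw [hq, ← ENNReal.ofReal_one]
    exact ENNReal.ofReal_le_ofReal hp.le
  have hq0 : q ≠ 0 := by positivity
  have hqt : q ≠ ⊤ := ENNReal.ofReal_ne_top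
  have hqr : q.toReal = p := ENNReal.toReal_ofReal hp0.le
  have hSfin : volume S ≠ ⊤ := fun h => hfin (eq_top_iff.2 (h ▸ measure_mono hSA))
  haveI : IsFiniteMeasure (volume.restrict S) :=
    ⟨by rw [Measure.restrict_apply_univ]; exact hSfin.lt_top⟩
  have hle : volume.restrict S ≤ volume.restrict A := Measure.restrict_mono hSA le_rfl
  have hfS : MemLp f q (volume.restrict S) := hf.mono_measure hle
  have h1 : eLpNorm f 1 (volume.restrict S) ≤
      eLpNorm f q (volume.restrict S) * (volume.restrict S) Set.univ ^ (1/(1:ENNReal).toReal - 1/q.toReal) :=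
    eLpNorm_le_eLpNorm_mul_rpow_measure_univ hq1 hfS.1
  have h2 : eLpNorm f q (volume.restrict S) ≤ eLpNorm f q (volume.restrict A) :=
    eLpNorm_mono_measure f hle
  have h3 : eLpNorm f q (volume.restrict A)
      = ENNReal.ofReal ((∫ t in A, ‖f t‖ ^ p) ^ (1/p)) := by
    rw [hf.eLpNorm_eq_integral_rpow_norm hq0 hqt, hqr, one_div]
  have hmuS : (volume.restrict S) Set.univ = volume S := by rw [Measure.restrict_apply_univ]
  -- left side
  have hLHS : ∫ t in S, ‖f t‖ = (eLpNorm f 1 (volume.restrict S)).toReal := by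
    rw [eLpNorm_one_eq_lintegral_enorm, ← integral_norm_eq_lintegral_enorm hfS.1]
  have hα : (0:ℝ) ≤ 1 - 1/p := by
    rw [sub_nonneg]
    rw [div_le_one hp0]
    exact hp.le
  have hRfin : eLpNorm f q (volume.restrict A) * (volume S) ^ ((1:ℝ) - 1/p) ≠ ⊤ := by
    apply ENNReal.mul_ne_top
    · rw [h3]; exact ENNReal.ofReal_ne_top
    · exact (ENNReal.rpow_lt_top_of_nonneg hα hSfin).ne
  have h4 : eLpNorm f 1 (volume.restrict S) ≤
      eLpNorm f q (volume.restrict A) * (volume S) ^ ((1:ℝ) - 1/p) := by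
    refine h1.trans ?_
    rw [hmuS]
    have hexp : (1/(1:ENNReal).toReal - 1/q.toReal) = 1 - 1/p := by simp [hqr]
    rw [hexp]
    exact mul_le_mul_left h2 _
  have := ENNReal.toReal_mono hRfin h4
  rw [hLHS]
  refine this.trans (le_of_eq ?_)
  rw [ENNReal.toReal_mul, h3, ENNReal.toReal_ofReal (by positivity), ENNReal.toReal_rpow]
  rw [mul_comm]

lemma Emeas (L : ℝ) (hL : 0 ≤ L) {b : ℝ → ℂ} (hb : IntervalIntegrable b volume 0 L)
    {s : ℝ} (hs : s ∈ Icc 0 L) :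
    AEStronglyMeasurable (fun t => Complex.exp (Complex.I *
      (if s ≤ t then ∫ τ in s..t, b τ else (∫ τ in s..L, b τ) + ∫ τ in (0:ℝ)..t, b τ)))
      (volume.restrict (Ioc 0 L)) := by
  have hcont : Continuous fun z : ℂ => Complex.exp (Complex.I * z) :=
    Complex.continuous_exp.comp (continuous_const.mul continuous_id)
  have hB : AEStronglyMeasurable (fun t =>
      (if s ≤ t then ∫ τ in s..t, b τ else (∫ τ in s..L, b τ) + ∫ τ in (0:ℝ)..t, b τ))
      (volume.restrict (Ioc 0 L)) := by
    have huIcc : Set.uIcc (0:ℝ) L = Icc 0 L := uIcc_of_le hL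
    have hG1 : ContinuousOn (fun t => ∫ τ in s..t, b τ) (Icc 0 L) := by
      have := continuousOn_primitive_interval' hb (by rw [huIcc]; exact hs)
      rwa [huIcc] at this
    have hG2 : ContinuousOn (fun t => (∫ τ in s..L, b τ) + ∫ τ in (0:ℝ)..t, b τ) (Icc 0 L) := by
      have h0 : (0:ℝ) ∈ Set.uIcc (0:ℝ) L := by rw [huIcc]; exact mem_Icc.2 ⟨le_refl 0, hL⟩
      have := continuousOn_primitive_interval' hb h0
      rw [huIcc] at this
      exact continuousOn_const.add this
    have hcover : Ioc 0 L = (Ioc 0 L ∩ Ici s) ∪ (Ioc 0 L ∩ Iio s) := by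
      have : Ici s ∪ Iio s = univ := by ext τ; simp [le_or_gt]
      rw [← inter_union_distrib_left, this, inter_univ]
    rw [hcover, aestronglyMeasurable_union_iff]
    constructor
    · refine ((hG1.aestronglyMeasurable measurableSet_Icc).mono_measure
        (Measure.restrict_mono (fun t ht => mem_Icc.2 ⟨ht.1.1.le, ht.1.2⟩) le_rfl)).congr ?_
      refine (ae_restrict_iff' (measurableSet_Ioc.inter measurableSet_Ici)).2
        (Filter.Eventually.of_forall fun t ht => ?_)
      have hst : s ≤ t := ht.2
      simp [hst]
    · refine ((hG2.aestronglyMeasurable measurableSet_Icc).mono_measure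
        (Measure.restrict_mono (fun t ht => mem_Icc.2 ⟨ht.1.1.le, ht.1.2⟩) le_rfl)).congr ?_
      refine (ae_restrict_iff' (measurableSet_Ioc.inter measurableSet_Iio)).2
        (Filter.Eventually.of_forall fun t ht => ?_)
      have hst : ¬ s ≤ t := not_le.2 ht.2
      simp [hst]
  exact hcont.comp_aestronglyMeasurable hB

lemma bIntSub (L : ℝ) {b : ℝ → ℂ} (hbi : IntegrableOn b (Ioc 0 L)) {u v : ℝ}
    (hu : u ∈ Icc 0 L) (hv : v ∈ Icc 0 L) : IntervalIntegrable b volume u v := by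
  rw [intervalIntegrable_iff]
  exact hbi.mono_set (Ioc_subset_Ioc (le_min hu.1 hv.1) (max_le hu.2 hv.2))

lemma bIntSubAbs (L : ℝ) {b : ℝ → ℂ} (hbi : IntegrableOn b (Ioc 0 L)) {u v : ℝ}
    (hu : u ∈ Icc 0 L) (hv : v ∈ Icc 0 L) :
    IntervalIntegrable (fun τ => ‖b τ‖) volume u v := by
  simpa using (bIntSub L hbi hu hv).norm

lemma Bbound (L : ℝ) {b : ℝ → ℂ} (hbi : IntegrableOn b (Ioc 0 L))
    {s t : ℝ} (hs : s ∈ Icc 0 L) (ht : t ∈ Icc 0 L) :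
    ‖if s ≤ t then ∫ τ in s..t, b τ else (∫ τ in s..L, b τ) + ∫ τ in (0:ℝ)..t, b τ‖
      ≤ ∫ τ in (0:ℝ)..L, ‖b τ‖ := by
  have hnn : 0 ≤ᵐ[volume.restrict (Ioc 0 L)] fun τ => ‖b τ‖ :=
    Filter.Eventually.of_forall fun τ => norm_nonneg _
  have hLIcc : L ∈ Icc 0 L := ⟨(hs.1.trans hs.2), le_refl L⟩
  have h0Icc : (0:ℝ) ∈ Icc 0 L := ⟨le_refl 0, hs.1.trans hs.2⟩
  split_ifs with h
  · calc ‖∫ τ in s..t, b τ‖ ≤ ∫ τ in s..t, ‖b τ‖ := by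
          simpa using
            intervalIntegral.norm_integral_le_integral_norm (f := b) (μ := volume) h
      _ ≤ ∫ τ in (0:ℝ)..L, ‖b τ‖ :=
          integral_mono_interval hs.1 h ht.2 hnn (bIntSubAbs L hbi h0Icc hLIcc)
  · push_neg at h
    calc ‖(∫ τ in s..L, b τ) + ∫ τ in (0:ℝ)..t, b τ‖
        ≤ ‖∫ τ in s..L, b τ‖ + ‖∫ τ in (0:ℝ)..t, b τ‖ :=
          norm_add_le _ _
      _ ≤ (∫ τ in s..L, ‖b τ‖) + ∫ τ in (0:ℝ)..t, ‖b τ‖ := by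
          gcongr
          · simpa using
              intervalIntegral.norm_integral_le_integral_norm (f := b) (μ := volume) hs.2
          · simpa using
              intervalIntegral.norm_integral_le_integral_norm (f := b) (μ := volume) ht.1
      _ ≤ (∫ τ in s..L, ‖b τ‖) + ∫ τ in (0:ℝ)..s, ‖b τ‖ := by
          gcongr
          exact integral_mono_interval le_rfl ht.1 h.le (Filter.Eventually.of_forall fun τ => norm_nonneg _) (bIntSubAbs L hbi h0Icc hs)
      _ = ∫ τ in (0:ℝ)..L, ‖b τ‖ := by
          rw [add_comm]
          exact integral_add_adjacent_intervals (bIntSubAbs L hbi h0Icc hs) (bIntSubAbs L hbi hs hLIcc)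
lemma Bdiff_out (L : ℝ) {b : ℝ → ℂ} (hbi : IntegrableOn b (Ioc 0 L))
    {s₁ s₂ t : ℝ} (hs₁ : s₁ ∈ Icc 0 L) (hs₂ : s₂ ∈ Icc 0 L) (h12 : s₁ ≤ s₂) (ht : t ∈ Icc 0 L)
    (hout : ¬ (s₁ ≤ t ∧ t < s₂)) :
    (if s₁ ≤ t then ∫ τ in s₁..t, b τ else (∫ τ in s₁..L, b τ) + ∫ τ in (0:ℝ)..t, b τ)
    - (if s₂ ≤ t then ∫ τ in s₂..t, b τ else (∫ τ in s₂..L, b τ) + ∫ τ in (0:ℝ)..t, b τ)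
    = ∫ τ in s₁..s₂, b τ := by
  rcases not_and_or.1 hout with h | h
  · push_neg at h
    rw [if_neg (not_le.2 h), if_neg (not_le.2 (lt_of_lt_of_le h h12))]
    have hadj : (∫ τ in s₁..s₂, b τ) + ∫ τ in s₂..L, b τ = ∫ τ in s₁..L, b τ :=
      integral_add_adjacent_intervals (bIntSub L hbi hs₁ hs₂) (bIntSub L hbi hs₂ ⟨hs₁.1.trans hs₁.2, le_refl L⟩)
    rw [← hadj]; ring
  · push_neg at h
    rw [if_pos (h12.trans h), if_pos h]
    have hadj : (∫ τ in s₁..s₂, b τ) + ∫ τ in s₂..t, b τ = ∫ τ in s₁..t, b τ :=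
      integral_add_adjacent_intervals (bIntSub L hbi hs₁ hs₂) (bIntSub L hbi hs₂ ht)
    rw [← hadj]; ring

lemma Bdiff_in (L : ℝ) {b : ℝ → ℂ} (hbi : IntegrableOn b (Ioc 0 L))
    {s₁ s₂ t : ℝ} (hs₁ : s₁ ∈ Icc 0 L) (hs₂ : s₂ ∈ Icc 0 L) (ht : t ∈ Icc 0 L)
    (hin : s₁ ≤ t ∧ t < s₂) :
    (if s₁ ≤ t then ∫ τ in s₁..t, b τ else (∫ τ in s₁..L, b τ) + ∫ τ in (0:ℝ)..t, b τ)
    - (if s₂ ≤ t then ∫ τ in s₂..t, b τ else (∫ τ in s₂..L, b τ) + ∫ τ in (0:ℝ)..t, b τ)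
    = -(∫ τ in (0:ℝ)..s₁, b τ) - ∫ τ in s₂..L, b τ := by
  rw [if_pos hin.1, if_neg (not_le.2 hin.2)]
  have h0 : (0:ℝ) ∈ Icc 0 L := ⟨le_refl 0, hs₁.1.trans hs₁.2⟩
  have hadj : (∫ τ in (0:ℝ)..s₁, b τ) + ∫ τ in s₁..t, b τ = ∫ τ in (0:ℝ)..t, b τ :=
    integral_add_adjacent_intervals (bIntSub L hbi h0 hs₁) (bIntSub L hbi hs₁ ht)
  rw [← hadj]; ring
noncomputable def EE (L : ℝ) (b : ℝ → ℂ) (s t : ℝ) : ℂ :=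
  Complex.exp (Complex.I *
    (if s ≤ t then ∫ τ in s..t, b τ else (∫ τ in s..L, b τ) + ∫ τ in (0:ℝ)..t, b τ))

lemma EEmeas (L : ℝ) (hL : 0 ≤ L) {b : ℝ → ℂ} (hb : IntervalIntegrable b volume 0 L)
    {s : ℝ} (hs : s ∈ Icc 0 L) :
    AEStronglyMeasurable (fun t => EE L b s t) (volume.restrict (Ioc 0 L)) := by
  simpa only [EE] using Emeas L hL hb hs

lemma EEbound (L : ℝ) {b : ℝ → ℂ} (hbi : IntegrableOn b (Ioc 0 L))
    {s t : ℝ} (hs : s ∈ Icc 0 L) (ht : t ∈ Icc 0 L) :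
    ‖EE L b s t‖ ≤ Real.exp (∫ τ in (0:ℝ)..L, ‖b τ‖) := by
  rw [EE, Complex.norm_exp]
  apply Real.exp_le_exp.2
  calc (Complex.I * _).re ≤ |(Complex.I * _).re| := le_abs_self _
    _ ≤ ‖Complex.I * _‖ := Complex.abs_re_le_norm _
    _ = ‖_‖ := by rw [norm_mul, Complex.norm_I, one_mul]
    _ ≤ _ := Bbound L hbi hs ht

lemma EEdiff (L : ℝ) {b : ℝ → ℂ} (hbi : IntegrableOn b (Ioc 0 L))
    {s₁ s₂ t : ℝ} (hs₁ : s₁ ∈ Icc 0 L) (hs₂ : s₂ ∈ Icc 0 L) (h12 : s₁ ≤ s₂) (ht : t ∈ Icc 0 L) :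
    ‖EE L b s₁ t - EE L b s₂ t‖ ≤ Real.exp (∫ τ in (0:ℝ)..L, ‖b τ‖) *
      (if s₁ ≤ t ∧ t < s₂ then
        (∫ τ in (0:ℝ)..s₁, ‖b τ‖) + ∫ τ in s₂..L, ‖b τ‖
       else ∫ τ in s₁..s₂, ‖b τ‖) := by
  have h0 : (0:ℝ) ∈ Icc 0 L := ⟨le_refl 0, hs₁.1.trans hs₁.2⟩
  have hLm : L ∈ Icc 0 L := ⟨hs₁.1.trans hs₁.2, le_refl L⟩
  set w₁ := (if s₁ ≤ t then ∫ τ in s₁..t, b τ else (∫ τ in s₁..L, b τ) + ∫ τ in (0:ℝ)..t, b τ)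
    with hw₁
  set w₂ := (if s₂ ≤ t then ∫ τ in s₂..t, b τ else (∫ τ in s₂..L, b τ) + ∫ τ in (0:ℝ)..t, b τ)
    with hw₂
  have hlip : ‖EE L b s₁ t - EE L b s₂ t‖ ≤
      Real.exp (∫ τ in (0:ℝ)..L, ‖b τ‖) * ‖w₁ - w₂‖ := by
    have h := lipExp (x := ∫ τ in (0:ℝ)..L, ‖b τ‖)
      (z₁ := Complex.I * w₁) (z₂ := Complex.I * w₂) ?_ ?_
    · rw [EE, EE, ← hw₁, ← hw₂]
      refine h.trans (le_of_eq ?_)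
      congr 1
      rw [← mul_sub, norm_mul, Complex.norm_I, one_mul]
    · calc ‖Complex.I * w₁‖ = ‖w₁‖ := by
            rw [norm_mul, Complex.norm_I, one_mul]
        _ ≤ _ := Bbound L hbi hs₁ ht
    · calc ‖Complex.I * w₂‖ = ‖w₂‖ := by
            rw [norm_mul, Complex.norm_I, one_mul]
        _ ≤ _ := Bbound L hbi hs₂ ht
  refine hlip.trans ?_
  have hx0 : (0:ℝ) ≤ Real.exp (∫ τ in (0:ℝ)..L, ‖b τ‖) := (Real.exp_pos _).le
  apply mul_le_mul_of_nonneg_left _ hx0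
  split_ifs with h
  · rw [hw₁, hw₂, Bdiff_in L hbi hs₁ hs₂ ht h]
    calc ‖-(∫ τ in (0:ℝ)..s₁, b τ) - ∫ τ in s₂..L, b τ‖
        ≤ ‖-(∫ τ in (0:ℝ)..s₁, b τ)‖ + ‖∫ τ in s₂..L, b τ‖ :=
          norm_sub_le _ _
      _ ≤ (∫ τ in (0:ℝ)..s₁, ‖b τ‖) + ∫ τ in s₂..L, ‖b τ‖ := by
          rw [norm_neg]
          gcongr
          · simpa using
              intervalIntegral.norm_integral_le_integral_norm (f := b) (μ := volume) hs₁.1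
          · simpa using
              intervalIntegral.norm_integral_le_integral_norm (f := b) (μ := volume) hs₂.2
  · rw [hw₁, hw₂, Bdiff_out L hbi hs₁ hs₂ h12 ht h]
    simpa using
      intervalIntegral.norm_integral_le_integral_norm (f := b) (μ := volume) h12
lemma keylem (L p : ℝ) (hL : 0 < L) (hp : 1 < p) {b r : ℝ → ℂ}
    (hb : MemLp b (ENNReal.ofReal p) (volume.restrict (Set.Ioc 0 L)))
    (hr : MemLp r (ENNReal.ofReal p) (volume.restrict (Set.Ioc 0 L)))
    {s₁ s₂ : ℝ} (hs₁ : s₁ ∈ Icc 0 L) (hs₂ : s₂ ∈ Icc 0 L) (h12 : s₁ ≤ s₂) :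
    ‖(∫ t in (0:ℝ)..L, r t * EE L b s₁ t) - ∫ t in (0:ℝ)..L, r t * EE L b s₂ t‖ ≤
      3 * Real.exp (∫ τ in (0:ℝ)..L, ‖b τ‖) *
        ((∫ t in Set.Ioc (0:ℝ) L, ‖b t‖ ^ p) ^ (1/p)) * L ^ (1 - 1/p) *
        (min (s₂ - s₁) (L - (s₂ - s₁))) ^ (1 - 1/p) *
        ((∫ t in Set.Ioc (0:ℝ) L, ‖r t‖ ^ p) ^ (1/p)) := by
  have hp0 : 0 < p := lt_trans one_pos hp
  have hq1 : (1:ENNReal) ≤ ENNReal.ofReal p := by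
    rw [← ENNReal.ofReal_one]; exact ENNReal.ofReal_le_ofReal hp.le
  have hIocFin : volume (Ioc (0:ℝ) L) ≠ ⊤ := by simp [Real.volume_Ioc]
  haveI : IsFiniteMeasure (volume.restrict (Ioc (0:ℝ) L)) :=
    ⟨by rw [Measure.restrict_apply_univ]; exact hIocFin.lt_top⟩
  have hbi : IntegrableOn b (Ioc 0 L) := hb.integrable hq1
  have hri : IntegrableOn r (Ioc 0 L) := hr.integrable hq1
  have h0m : (0:ℝ) ∈ Icc 0 L := ⟨le_refl 0, hL.le⟩
  have hLmem : L ∈ Icc 0 L := ⟨hL.le, le_refl L⟩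
  set α := 1 - 1/p with hαdef
  have hα0 : (0:ℝ) ≤ α := by rw [hαdef, sub_nonneg, div_le_one hp0]; exact hp.le
  set x := ∫ τ in (0:ℝ)..L, ‖b τ‖ with hxdef
  set Bp := (∫ t in Set.Ioc (0:ℝ) L, ‖b t‖ ^ p) ^ (1/p) with hBpdef
  set Rp := (∫ t in Set.Ioc (0:ℝ) L, ‖r t‖ ^ p) ^ (1/p) with hRpdef
  have hBp0 : 0 ≤ Bp := Real.rpow_nonneg
    (integral_nonneg fun t => Real.rpow_nonneg (norm_nonneg _) _) _
  have hRp0 : 0 ≤ Rp := Real.rpow_nonneg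
    (integral_nonneg fun t => Real.rpow_nonneg (norm_nonneg _) _) _
  have hex0 : (0:ℝ) < Real.exp x := Real.exp_pos _
  set d := s₂ - s₁ with hddef
  have hd0 : (0:ℝ) ≤ d := sub_nonneg.2 h12
  have hdL : d ≤ L := by rw [hddef]; linarith [hs₂.2, hs₁.1]
  have hLd0 : (0:ℝ) ≤ L - d := sub_nonneg.2 hdL
  -- Hölder bounds for the pieces of b
  have hK₁ : (∫ τ in s₁..s₂, ‖b τ‖) ≤ d ^ α * Bp := by
    rw [integral_of_le h12]
    have h := holderEst hp (f := b) (S := Ioc s₁ s₂) measurableSet_Ioc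
      (Ioc_subset_Ioc hs₁.1 hs₂.2) hIocFin hb
    rwa [Real.volume_Ioc, ← hddef, ENNReal.toReal_ofReal hd0] at h
  have hK₂ : ((∫ τ in (0:ℝ)..s₁, ‖b τ‖) + ∫ τ in s₂..L, ‖b τ‖)
      ≤ 2 * ((L - d) ^ α * Bp) := by
    have h1 := holderEst hp (f := b) (S := Ioc 0 s₁) measurableSet_Ioc
      (Ioc_subset_Ioc le_rfl hs₁.2) hIocFin hb
    have h2 := holderEst hp (f := b) (S := Ioc s₂ L) measurableSet_Ioc
      (Ioc_subset_Ioc hs₂.1 le_rfl) hIocFin hb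
    rw [Real.volume_Ioc, ENNReal.toReal_ofReal (by linarith [hs₁.1])] at h1
    rw [Real.volume_Ioc, ENNReal.toReal_ofReal (by linarith [hs₂.2])] at h2
    rw [integral_of_le hs₁.1, integral_of_le hs₂.2]
    have e1 : (s₁ - 0:ℝ) ^ α * Bp ≤ (L - d) ^ α * Bp :=
      mul_le_mul_of_nonneg_right
        (Real.rpow_le_rpow (by linarith [hs₁.1]) (by rw [hddef]; linarith [hs₂.2]) hα0) hBp0
    have e2 : (L - s₂:ℝ) ^ α * Bp ≤ (L - d) ^ α * Bp :=
      mul_le_mul_of_nonneg_right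
        (Real.rpow_le_rpow (by linarith [hs₂.2]) (by rw [hddef]; linarith [hs₁.1]) hα0) hBp0
    linarith [h1.trans e1, h2.trans e2]
  -- integrability
  have hb0L : IntervalIntegrable b volume 0 L := bIntSub L hbi h0m hLmem
  have hInt : ∀ s : ℝ, s ∈ Icc 0 L → IntegrableOn (fun t => r t * EE L b s t) (Ioc 0 L) := by
    intro s hs
    have hbd : ∀ᵐ t ∂(volume.restrict (Ioc (0:ℝ) L)), ‖EE L b s t‖ ≤ Real.exp x :=
      (ae_restrict_iff' measurableSet_Ioc).2 (Filter.Eventually.of_forall fun t ht => by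
        simpa using EEbound L hbi hs ⟨ht.1.le, ht.2⟩)
    have h := Integrable.bdd_mul hri (EEmeas L hL.le hb0L hs) hbd
    simpa [mul_comm, IntegrableOn] using h
  have hI₁ := hInt s₁ hs₁
  have hI₂ := hInt s₂ hs₂
  have hII₁ : IntervalIntegrable (fun t => r t * EE L b s₁ t) volume 0 L :=
    (intervalIntegrable_iff_integrableOn_Ioc_of_le hL.le).2 hI₁
  have hII₂ : IntervalIntegrable (fun t => r t * EE L b s₂ t) volume 0 L :=
    (intervalIntegrable_iff_integrableOn_Ioc_of_le hL.le).2 hI₂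
  have hg : IntegrableOn (fun t => r t * EE L b s₁ t - r t * EE L b s₂ t) (Ioc 0 L) :=
    hI₁.sub hI₂
  have hsub : (∫ t in (0:ℝ)..L, r t * EE L b s₁ t) - (∫ t in (0:ℝ)..L, r t * EE L b s₂ t)
      = ∫ t in (0:ℝ)..L, (r t * EE L b s₁ t - r t * EE L b s₂ t) := (integral_sub hII₁ hII₂).symm
  rw [hsub]
  have hnorm : ‖∫ t in (0:ℝ)..L, (r t * EE L b s₁ t - r t * EE L b s₂ t)‖
      ≤ ∫ t in Ioc (0:ℝ) L, ‖r t * EE L b s₁ t - r t * EE L b s₂ t‖ := by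
    rw [intervalIntegral.integral_of_le hL.le]
    exact norm_integral_le_integral_norm _
  set S := Ico s₁ s₂ with hSdef
  have hsplit : (∫ t in Ioc (0:ℝ) L, ‖r t * EE L b s₁ t - r t * EE L b s₂ t‖)
      = (∫ t in Ioc (0:ℝ) L ∩ S, ‖r t * EE L b s₁ t - r t * EE L b s₂ t‖)
        + ∫ t in Ioc (0:ℝ) L \ S, ‖r t * EE L b s₁ t - r t * EE L b s₂ t‖ :=
    (integral_inter_add_diff measurableSet_Ico hg.norm).symm
  have hIr : IntegrableOn (fun t => ‖r t‖) (Ioc 0 L) := by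
    exact hri.norm
  -- piece 1
  have hpc1 : ∀ t ∈ Ioc (0:ℝ) L ∩ S, ‖r t * EE L b s₁ t - r t * EE L b s₂ t‖ ≤
      ‖r t‖ * (Real.exp x * (2 * ((L - d) ^ α * Bp))) := by
    intro t ht
    rw [← mul_sub, norm_mul]
    have h := EEdiff L hbi hs₁ hs₂ h12 ⟨ht.1.1.le, ht.1.2⟩
    rw [if_pos (mem_Ico.1 ht.2)] at h
    exact mul_le_mul_of_nonneg_left
      (h.trans (mul_le_mul_of_nonneg_left hK₂ hex0.le)) (norm_nonneg _)
  have hint1 : (∫ t in Ioc (0:ℝ) L ∩ S, ‖r t * EE L b s₁ t - r t * EE L b s₂ t‖)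
      ≤ (d ^ α * Rp) * (Real.exp x * (2 * ((L - d) ^ α * Bp))) := by
    have hmo := setIntegral_mono_on (IntegrableOn.mono_set hg.norm inter_subset_left)
      ((hIr.mono_set inter_subset_left).mul_const _)
      (measurableSet_Ioc.inter measurableSet_Ico) hpc1
    refine hmo.trans ?_
    rw [MeasureTheory.integral_mul_const]
    refine mul_le_mul_of_nonneg_right ?_
      (mul_nonneg hex0.le (mul_nonneg (by norm_num) (mul_nonneg (Real.rpow_nonneg hLd0 _) hBp0)))
    have hh := holderEst hp (f := r) (S := Ioc 0 L ∩ S)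
      (measurableSet_Ioc.inter measurableSet_Ico) inter_subset_left hIocFin hr
    refine hh.trans (mul_le_mul_of_nonneg_right ?_ hRp0)
    refine Real.rpow_le_rpow ENNReal.toReal_nonneg ?_ hα0
    refine ENNReal.toReal_le_of_le_ofReal hd0 ?_
    refine (measure_mono inter_subset_right).trans ?_
    rw [hSdef, Real.volume_Ico, ← hddef]
  -- piece 2
  have hpc2 : ∀ t ∈ Ioc (0:ℝ) L \ S, ‖r t * EE L b s₁ t - r t * EE L b s₂ t‖ ≤
      ‖r t‖ * (Real.exp x * (d ^ α * Bp)) := by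
    intro t ht
    rw [← mul_sub, norm_mul]
    have h := EEdiff L hbi hs₁ hs₂ h12 ⟨ht.1.1.le, ht.1.2⟩
    rw [if_neg (by simpa [hSdef, mem_Ico] using ht.2)] at h
    exact mul_le_mul_of_nonneg_left
      (h.trans (mul_le_mul_of_nonneg_left hK₁ hex0.le)) (norm_nonneg _)
  have hint2 : (∫ t in Ioc (0:ℝ) L \ S, ‖r t * EE L b s₁ t - r t * EE L b s₂ t‖)
      ≤ ((L - d) ^ α * Rp) * (Real.exp x * (d ^ α * Bp)) := by
    have hmo := setIntegral_mono_on (IntegrableOn.mono_set hg.norm diff_subset)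
      ((hIr.mono_set diff_subset).mul_const _) (measurableSet_Ioc.diff measurableSet_Ico) hpc2
    refine hmo.trans ?_
    rw [MeasureTheory.integral_mul_const]
    refine mul_le_mul_of_nonneg_right ?_
      (mul_nonneg hex0.le (mul_nonneg (Real.rpow_nonneg hd0 _) hBp0))
    have hh := holderEst hp (f := r) (S := Ioc 0 L \ S)
      (measurableSet_Ioc.diff measurableSet_Ico) diff_subset hIocFin hr
    refine hh.trans (mul_le_mul_of_nonneg_right ?_ hRp0)
    refine Real.rpow_le_rpow ENNReal.toReal_nonneg ?_ hα0
    refine ENNReal.toReal_le_of_le_ofReal hLd0 ?_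
    have hsub2 : Ioc (0:ℝ) L \ S ⊆ Ioc 0 s₁ ∪ Icc s₂ L := by
      rintro t ⟨ht1, ht2⟩
      rw [hSdef, mem_Ico, not_and_or, not_le, not_lt] at ht2
      rcases ht2 with h | h
      · exact Or.inl ⟨ht1.1, h.le⟩
      · exact Or.inr ⟨h, ht1.2⟩
    refine (measure_mono hsub2).trans ((measure_union_le _ _).trans ?_)
    rw [Real.volume_Ioc, Real.volume_Icc,
      ← ENNReal.ofReal_add (by linarith [hs₁.1]) (by linarith [hs₂.2])]
    exact ENNReal.ofReal_le_ofReal (by rw [hddef]; linarith)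
  -- combine
  have hmin0 : (0:ℝ) ≤ min d (L - d) := le_min hd0 hLd0
  have hrp : d ^ α * (L - d) ^ α ≤ L ^ α * (min d (L - d)) ^ α := by
    rw [← Real.mul_rpow hd0 hLd0, ← Real.mul_rpow hL.le hmin0]
    refine Real.rpow_le_rpow (mul_nonneg hd0 hLd0) ?_ hα0
    rcases le_total d (L - d) with h | h
    · rw [min_eq_left h]; nlinarith
    · rw [min_eq_right h]; nlinarith
  calc ‖∫ t in (0:ℝ)..L, (r t * EE L b s₁ t - r t * EE L b s₂ t)‖
      ≤ ∫ t in Ioc (0:ℝ) L, ‖r t * EE L b s₁ t - r t * EE L b s₂ t‖ := hnorm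
    _ = _ + _ := hsplit
    _ ≤ (d ^ α * Rp) * (Real.exp x * (2 * ((L - d) ^ α * Bp)))
        + ((L - d) ^ α * Rp) * (Real.exp x * (d ^ α * Bp)) := add_le_add hint1 hint2
    _ = 3 * Real.exp x * Bp * Rp * (d ^ α * (L - d) ^ α) := by ring
    _ ≤ 3 * Real.exp x * Bp * Rp * (L ^ α * (min d (L - d)) ^ α) :=
        mul_le_mul_of_nonneg_left hrp
          (mul_nonneg (mul_nonneg (mul_nonneg (by norm_num) hex0.le) hBp0) hRp0)
    _ = 3 * Real.exp x * Bp * L ^ α * (min d (L - d)) ^ α * Rp := by ring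

/-- For `b, r ∈ L^p([0,L])`, `1 < p < ∞`, with `e^{i∫₀^L b} ≠ 1`, the function
`T_b r` is Hölder continuous of order `1 - 1/p` with respect to the distance on the circle
`ℝ/Lℤ`: `|(T_b r)(s₁) - (T_b r)(s₂)| ≤ C · min(|s₁-s₂|, L-|s₁-s₂|)^{1-1/p} · ‖r‖_{L^p}`,
with `C` depending only on `L`, `p`, `b`. -/
theorem stmt9 (L p : ℝ) (hL : 0 < L) (hp : 1 < p) (b : ℝ → ℂ)
    (hb : MemLp b (ENNReal.ofReal p) (volume.restrict (Set.Ioc 0 L)))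
    (hcomp : Complex.exp (Complex.I * ∫ t in (0:ℝ)..L, b t) ≠ 1) :
    ∃ C > 0, ∀ r : ℝ → ℂ,
      MemLp r (ENNReal.ofReal p) (volume.restrict (Set.Ioc 0 L)) →
      ∀ s₁ ∈ Set.Icc (0:ℝ) L, ∀ s₂ ∈ Set.Icc (0:ℝ) L,
        ‖Tb L b r s₁ - Tb L b r s₂‖ ≤
          C * (min |s₁ - s₂| (L - |s₁ - s₂|)) ^ (1 - 1/p) *
            (∫ t in Set.Ioc (0:ℝ) L, ‖r t‖ ^ p) ^ (1/p) := by
  have hp0 : 0 < p := lt_trans one_pos hp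
  set c : ℂ := Complex.I * (Complex.exp (Complex.I * ∫ t in (0:ℝ)..L, b t) - 1)⁻¹ with hc
  set x := ∫ τ in (0:ℝ)..L, ‖b τ‖ with hx
  set Bp := (∫ t in Set.Ioc (0:ℝ) L, ‖b t‖ ^ p) ^ (1/p) with hBp
  have hBp0 : 0 ≤ Bp := Real.rpow_nonneg
    (integral_nonneg fun t => Real.rpow_nonneg (norm_nonneg _) _) _
  have hα0 : (0:ℝ) ≤ 1 - 1/p := by rw [sub_nonneg, div_le_one hp0]; exact hp.le
  have hK0 : 0 ≤ ‖c‖ * (3 * Real.exp x * Bp * L ^ (1 - 1/p)) :=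
    mul_nonneg (norm_nonneg _)
      (mul_nonneg (mul_nonneg (mul_nonneg (by norm_num) (Real.exp_pos _).le) hBp0)
        (Real.rpow_nonneg hL.le _))
  refine ⟨‖c‖ * (3 * Real.exp x * Bp * L ^ (1 - 1/p)) + 1,
    lt_of_lt_of_le one_pos (le_add_of_nonneg_left hK0), ?_⟩
  intro r hr s₁ hm₁ s₂ hm₂
  have hRp0 : (0:ℝ) ≤ (∫ t in Set.Ioc (0:ℝ) L, ‖r t‖ ^ p) ^ (1/p) :=
    Real.rpow_nonneg (integral_nonneg fun t => Real.rpow_nonneg (norm_nonneg _) _) _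
  have main : ∀ u v : ℝ, u ∈ Icc 0 L → v ∈ Icc 0 L → u ≤ v →
      ‖Tb L b r u - Tb L b r v‖ ≤
        (‖c‖ * (3 * Real.exp x * Bp * L ^ (1 - 1/p)) + 1) *
          (min |u - v| (L - |u - v|)) ^ (1 - 1/p) *
          (∫ t in Set.Ioc (0:ℝ) L, ‖r t‖ ^ p) ^ (1/p) := by
    intro u v hu hv huv
    have key := keylem L p hL hp hb hr hu hv huv
    have habs : |u - v| = v - u := by rw [abs_sub_comm]; exact abs_of_nonneg (sub_nonneg.2 huv)
    have hm0 : (0:ℝ) ≤ min (v - u) (L - (v - u)) :=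
      le_min (sub_nonneg.2 huv) (by linarith [hv.2, hu.1])
    have hTb : Tb L b r u - Tb L b r v =
        c * ((∫ t in (0:ℝ)..L, r t * EE L b u t) - ∫ t in (0:ℝ)..L, r t * EE L b v t) := by
      rw [mul_sub, hc]; simp only [Tb, EE]
    rw [hTb, norm_mul, habs]
    calc ‖c‖ * ‖(∫ t in (0:ℝ)..L, r t * EE L b u t)
            - ∫ t in (0:ℝ)..L, r t * EE L b v t‖
        ≤ ‖c‖ * (3 * Real.exp x * Bp * L ^ (1 - 1/p) *
            (min (v - u) (L - (v - u))) ^ (1 - 1/p) *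
            ((∫ t in Set.Ioc (0:ℝ) L, ‖r t‖ ^ p) ^ (1/p))) :=
          mul_le_mul_of_nonneg_left key (norm_nonneg _)
      _ = (‖c‖ * (3 * Real.exp x * Bp * L ^ (1 - 1/p))) *
            (min (v - u) (L - (v - u))) ^ (1 - 1/p) *
            ((∫ t in Set.Ioc (0:ℝ) L, ‖r t‖ ^ p) ^ (1/p)) := by ring
      _ ≤ (‖c‖ * (3 * Real.exp x * Bp * L ^ (1 - 1/p)) + 1) *
            (min (v - u) (L - (v - u))) ^ (1 - 1/p) *
            ((∫ t in Set.Ioc (0:ℝ) L, ‖r t‖ ^ p) ^ (1/p)) := by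
          refine mul_le_mul_of_nonneg_right (mul_le_mul_of_nonneg_right
            (le_add_of_nonneg_right zero_le_one) (Real.rpow_nonneg hm0 _)) hRp0
  rcases le_total s₁ s₂ with h | h
  · exact main s₁ s₂ hm₁ hm₂ h
  · have hres := main s₂ s₁ hm₂ hm₁ h
    rw [abs_sub_comm s₂ s₁] at hres
    rw [show Tb L b r s₁ - Tb L b r s₂ = -(Tb L b r s₂ - Tb L b r s₁) by ring,
      norm_neg]
    exact hres
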